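/- arXiv:2509.18370 — 4 statements merged into one kernel-verified Lean document; each statement's English description precedes it below -/
import Mathlib

section
/- Let f(θ) = 2/cos(θ/2) + 1/(cos(θ/2)·sin(θ/2)) + tan(θ/2). Then for every θ with 0 < θ < π, one has f(θ) ≥ 3·√3. -/
open Real

theorem ribbonlength_lower_bound (θ : ℝ) (h1 : 0 < θ) (h2 : θ < π) :
    3 * Real.sqrt 3 ≤
      2 / Real.cos (θ / 2) + 1 / (Real.cos (θ / 2) * Real.sin (θ / 2)) + Real.tan (θ / 2) := by
  have hs : 0 < Real.sin (θ / 2) :=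
    Real.sin_pos_of_pos_of_lt_pi (by linarith) (by linarith [Real.pi_pos])
  have hc : 0 < Real.cos (θ / 2) :=
    Real.cos_pos_of_mem_Ioo ⟨by linarith [Real.pi_pos], by linarith⟩
  rw [Real.tan_eq_sin_div_cos]
  set s := Real.sin (θ / 2) with hsdef
  set c := Real.cos (θ / 2) with hcdef
  have hpyth : s ^ 2 + c ^ 2 = 1 := Real.sin_sq_add_cos_sq (θ / 2)
  have h3 : Real.sqrt 3 ^ 2 = 3 := Real.sq_sqrt (by norm_num)
  have h3p : 0 < Real.sqrt 3 := Real.sqrt_pos.mpr (by norm_num)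
  have key : 3 * Real.sqrt 3 * (c * s) ≤ 2 * s + 1 + s ^ 2 := by
    nlinarith [sq_nonneg (2 * s - 1), sq_nonneg ((1 + s) ^ 2 - 3 * Real.sqrt 3 * s * c),
      mul_pos hs hc, mul_pos (mul_pos hs hc) h3p, sq_nonneg (s * c), sq_nonneg (s + c),
      sq_nonneg (s - c), hs.le, hc.le]
  have heq : 2 / c + 1 / (c * s) + s / c = (2 * s + 1 + s ^ 2) / (c * s) := by
    field_simp
  rw [heq, le_div_iff₀ (mul_pos hc hs)]
  nlinarith [key]
end

section
/- Let f(θ) = 2/cos(θ/2) + 1/(cos(θ/2)·sin(θ/2)) + tan(θ/2). If 0 < θ < π and f(θ) = 3·√3, then θ = π/3; equivalently, for every θ ∈ (0,π) with θ ≠ π/3 one has f(θ) > 3·√3. -/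
open Real

theorem ribbonlength_minimizer_unique (θ : ℝ) (h1 : 0 < θ) (h2 : θ < π)
    (hf : 2 / Real.cos (θ / 2) + 1 / (Real.cos (θ / 2) * Real.sin (θ / 2)) + Real.tan (θ / 2)
        = 3 * Real.sqrt 3) :
    θ = π / 3 := by
  set x := θ / 2 with hx
  have hx0 : 0 < x := by positivity
  have hxpi : x < π / 2 := by rw [hx]; linarith
  have hs : 0 < Real.sin x := Real.sin_pos_of_pos_of_lt_pi hx0 (by linarith [Real.pi_pos])
  have hc : 0 < Real.cos x := Real.cos_pos_of_mem_Ioo ⟨by linarith [Real.pi_pos], hxpi⟩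
  have htan : Real.tan x = Real.sin x / Real.cos x := Real.tan_eq_sin_div_cos x
  rw [htan] at hf
  have key : (1 + Real.sin x) ^ 2 = 3 * Real.sqrt 3 * (Real.sin x * Real.cos x) := by
    field_simp at hf
    have h3 : (1 + Real.sin x) ^ 2 * Real.cos x ^ 2
        = 3 * Real.sqrt 3 * (Real.sin x * Real.cos x) * Real.cos x ^ 2 := by
      linear_combination (Real.cos x ^ 2) * hf
    exact mul_right_cancel₀ (pow_ne_zero 2 hc.ne') h3
  have hsq : Real.sqrt 3 ^ 2 = 3 := Real.sq_sqrt (by norm_num)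
  have key2 : (1 + Real.sin x) ^ 4 = 27 * Real.sin x ^ 2 * (1 - Real.sin x ^ 2) := by
    have hc2 : Real.cos x ^ 2 = 1 - Real.sin x ^ 2 := Real.cos_sq' x
    have := congrArg (· ^ 2) key
    linear_combination this + 9 * Real.sin x ^ 2 * Real.cos x ^ 2 * hsq
      + 27 * Real.sin x ^ 2 * hc2
  have hs1 : Real.sin x < 1 := by
    rcases lt_or_eq_of_le (Real.sin_le_one x) with h | h
    · exact h
    · exfalso
      have : Real.cos x = 0 := by nlinarith [Real.sin_sq_add_cos_sq x]
      linarith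
  have hshalf : Real.sin x = 1 / 2 := by
    have hfac : (1 + Real.sin x) * (2 * Real.sin x - 1) ^ 2 * (7 * Real.sin x + 1) = 0 := by
      nlinarith [key2]
    have h1p : 0 < 1 + Real.sin x := by linarith
    have h7p : 0 < 7 * Real.sin x + 1 := by linarith
    have : (2 * Real.sin x - 1) ^ 2 = 0 := by
      rcases mul_eq_zero.mp hfac with h | h
      · rcases mul_eq_zero.mp h with h | h
        · linarith
        · exact h
      · linarith
    nlinarith [this]
  have hx6 : x = π / 6 := by
    have h6 : Real.sin (π / 6) = 1 / 2 := Real.sin_pi_div_six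
    apply Real.injOn_sin ⟨by linarith, le_of_lt hxpi⟩
      ⟨by linarith [Real.pi_pos], by linarith [Real.pi_pos]⟩
    rw [hshalf, h6]
  rw [hx] at hx6
  linarith
end

section
/- Let f(θ) = 2/cos(θ/2) + 1/(cos(θ/2)·sin(θ/2)) + tan(θ/2). Then f is strictly decreasing on the interval (0, π/3] and strictly increasing on the interval [π/3, π). -/
open Real

private theorem core1 (a b : ℝ) (ha : 0 < a) (hab : a < b) (hb : b ≤ 1/2) :
    (1+b)^3 * (a^2*(1-a)) < (1+a)^3 * (b^2*(1-b)) := by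
  nlinarith [mul_pos ha (sub_pos.2 hab), mul_pos (mul_pos ha ha) (sub_pos.2 hab),
    mul_nonneg (sub_pos.2 hab).le (sub_nonneg.2 hb), sq_nonneg (a-b), sq_nonneg (a+b),
    mul_nonneg (mul_nonneg ha.le ha.le) (sub_nonneg.2 hb),
    mul_pos ha (show (0:ℝ) < b by linarith)]

private theorem core2 (a b : ℝ) (ha : 1/2 ≤ a) (hab : a < b) (hb : b < 1) :
    (1+b)^3 * (a^2*(1-a)) > (1+a)^3 * (b^2*(1-b)) := by
  nlinarith [mul_pos (sub_pos.2 hab) (sub_pos.2 hb), sq_nonneg (a-b),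
    mul_nonneg (sub_pos.2 hab).le (sub_nonneg.2 (le_trans (by linarith) ha : (0:ℝ) ≤ a)),
    mul_nonneg (sub_nonneg.2 ha) (sub_pos.2 hab).le,
    mul_pos (sub_pos.2 hab) (show (0:ℝ) < 2*b-1 by linarith),
    mul_nonneg (mul_nonneg (sub_pos.2 hab).le (show (0:ℝ) ≤ 2*a-1 by linarith)) (sub_pos.2 hb).le,
    mul_nonneg (mul_nonneg (sub_pos.2 hab).le (show (0:ℝ) ≤ 2*b-1 by linarith)) (sub_pos.2 hb).le,
    mul_pos (mul_pos (sub_pos.2 hab) (show (0:ℝ) < b by linarith)) (sub_pos.2 hb)]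

private theorem sq_key (s c : ℝ) (hs : 0 < s) (hs1 : s < 1) (hc : 0 < c) (e : s^2+c^2=1) :
    ((1+s)^2/(s*c))^2 = (1+s)^3/(s^2*(1-s)) := by
  have h1 : s ≠ 0 := hs.ne'
  have h2 : c ≠ 0 := hc.ne'
  have h3 : (1:ℝ) - s ≠ 0 := by linarith
  field_simp
  linear_combination (-1 : ℝ) * e

private theorem ltf (s1 c1 s2 c2 : ℝ) (hs1 : 0 < s1) (h1 : s1 < 1) (hc1 : 0 < c1)
    (e1 : s1^2+c1^2=1) (hs2 : 0 < s2) (h2 : s2 < 1) (hc2 : 0 < c2) (e2 : s2^2+c2^2=1)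
    (hcore : (1+s2)^3 * (s1^2*(1-s1)) < (1+s1)^3 * (s2^2*(1-s2))) :
    (1+s2)^2/(s2*c2) < (1+s1)^2/(s1*c1) := by
  have hy : (0:ℝ) < (1+s1)^2/(s1*c1) := by positivity
  refine lt_of_pow_lt_pow_left₀ 2 hy.le ?_
  rw [sq_key s1 c1 hs1 h1 hc1 e1, sq_key s2 c2 hs2 h2 hc2 e2]
  rw [div_lt_div_iff₀ (mul_pos (pow_pos hs2 2) (by linarith)) (mul_pos (pow_pos hs1 2) (by linarith))]
  exact hcore

private theorem fval (θ : ℝ) (h1 : 0 < θ) (h2 : θ < π) :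
    2 / Real.cos (θ / 2) + 1 / (Real.cos (θ / 2) * Real.sin (θ / 2)) + Real.tan (θ / 2)
      = (1 + Real.sin (θ/2))^2 / (Real.sin (θ/2) * Real.cos (θ/2)) := by
  have hc : 0 < Real.cos (θ/2) := Real.cos_pos_of_mem_Ioo ⟨by linarith [pi_pos], by linarith⟩
  have hs : 0 < Real.sin (θ/2) := Real.sin_pos_of_pos_of_lt_pi (by linarith) (by linarith [pi_pos])
  rw [Real.tan_eq_sin_div_cos]
  field_simp
  ring

theorem ribbonlength_antitone_monotone :
    StrictAntiOn
      (fun θ : ℝ =>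
        2 / Real.cos (θ / 2) + 1 / (Real.cos (θ / 2) * Real.sin (θ / 2)) + Real.tan (θ / 2))
      (Set.Ioc 0 (π / 3))
    ∧ StrictMonoOn
      (fun θ : ℝ =>
        2 / Real.cos (θ / 2) + 1 / (Real.cos (θ / 2) * Real.sin (θ / 2)) + Real.tan (θ / 2))
      (Set.Ico (π / 3) π) := by
  have pi_pos := Real.pi_pos
  have sinmono := Real.strictMonoOn_sin
  have facts : ∀ θ : ℝ, 0 < θ → θ < π →
      0 < Real.sin (θ/2) ∧ Real.sin (θ/2) < 1 ∧ 0 < Real.cos (θ/2) ∧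
      Real.sin (θ/2)^2 + Real.cos (θ/2)^2 = 1 := by
    intro θ h1 h2
    have hmem : θ/2 ∈ Set.Icc (-(π/2)) (π/2) := ⟨by linarith, by linarith⟩
    have hs1 : Real.sin (θ/2) < Real.sin (π/2) :=
      sinmono hmem (Set.right_mem_Icc.2 (by linarith)) (by linarith)
    rw [Real.sin_pi_div_two] at hs1
    exact ⟨Real.sin_pos_of_pos_of_lt_pi (by linarith) (by linarith), hs1,
      Real.cos_pos_of_mem_Ioo ⟨by linarith, by linarith⟩, Real.sin_sq_add_cos_sq _⟩
  constructor
  · intro θ1 hm1 θ2 hm2 hlt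
    obtain ⟨h1a, h1b⟩ := hm1
    obtain ⟨h2a, h2b⟩ := hm2
    have h1p : θ1 < π := by linarith
    have h2p : θ2 < π := by linarith
    obtain ⟨s1p, s1l, c1p, e1⟩ := facts θ1 h1a h1p
    obtain ⟨s2p, s2l, c2p, e2⟩ := facts θ2 h2a h2p
    have hss : Real.sin (θ1/2) < Real.sin (θ2/2) :=
      sinmono ⟨by linarith, by linarith⟩ ⟨by linarith, by linarith⟩ (by linarith)
    have hhalf : Real.sin (θ2/2) ≤ 1/2 := by
      have := sinmono.monotoneOn (⟨by linarith, by linarith⟩ : θ2/2 ∈ Set.Icc (-(π/2)) (π/2))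
        (⟨by linarith, by linarith⟩ : π/6 ∈ Set.Icc (-(π/2)) (π/2)) (by linarith)
      rwa [Real.sin_pi_div_six] at this
    simp only
    rw [fval θ1 h1a h1p, fval θ2 h2a h2p]
    exact ltf _ _ _ _ s1p s1l c1p e1 s2p s2l c2p e2 (core1 _ _ s1p hss hhalf)
  · intro θ1 hm1 θ2 hm2 hlt
    obtain ⟨h1a, h1b⟩ := hm1
    obtain ⟨h2a, h2b⟩ := hm2
    have h1o : 0 < θ1 := by linarith
    have h2o : 0 < θ2 := by linarith
    obtain ⟨s1p, s1l, c1p, e1⟩ := facts θ1 h1o h1b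
    obtain ⟨s2p, s2l, c2p, e2⟩ := facts θ2 h2o h2b
    have hss : Real.sin (θ1/2) < Real.sin (θ2/2) :=
      sinmono ⟨by linarith, by linarith⟩ ⟨by linarith, by linarith⟩ (by linarith)
    have hhalf : 1/2 ≤ Real.sin (θ1/2) := by
      have := sinmono.monotoneOn (⟨by linarith, by linarith⟩ : π/6 ∈ Set.Icc (-(π/2)) (π/2))
        (⟨by linarith, by linarith⟩ : θ1/2 ∈ Set.Icc (-(π/2)) (π/2)) (by linarith)
      rwa [Real.sin_pi_div_six] at this
    simp only
    rw [fval θ1 h1o h1b, fval θ2 h2o h2b]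
    exact ltf _ _ _ _ s2p s2l c2p e2 s1p s1l c1p e1 (core2 _ _ hhalf hss s2l)
end

section
/- Fix a natural number n. The set of real numbers { 2/cos(θ/2) + 1/(cos(θ/2)·sin(θ/2)) + tan(θ/2) + 2·n·d·(1 + sin(θ/2)) : 0 < θ < π, d > 0 } has greatest lower bound 3·√3. -/
open Real

theorem ribbonlength_isGLB (n : ℕ) :
    IsGLB
      {r : ℝ | ∃ θ d : ℝ, 0 < θ ∧ θ < π ∧ 0 < d ∧
        r = 2 / Real.cos (θ / 2) + 1 / (Real.cos (θ / 2) * Real.sin (θ / 2))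
            + Real.tan (θ / 2) + 2 * n * d * (1 + Real.sin (θ / 2))}
      (3 * Real.sqrt 3) := by
  have s3 : (0:ℝ) < Real.sqrt 3 := Real.sqrt_pos.mpr (by norm_num)
  have s3sq : Real.sqrt 3 * Real.sqrt 3 = 3 := Real.mul_self_sqrt (by norm_num)
  constructor
  · rintro r ⟨θ, d, hθ0, hθπ, hd, rfl⟩
    have hx0 : 0 < θ / 2 := by linarith
    have hxπ : θ / 2 < π / 2 := by linarith
    have hs : 0 < Real.sin (θ / 2) :=
      Real.sin_pos_of_pos_of_lt_pi hx0 (by linarith [Real.pi_pos])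
    have hc : 0 < Real.cos (θ / 2) :=
      Real.cos_pos_of_mem_Ioo ⟨by linarith, hxπ⟩
    have hsc : Real.sin (θ/2) ^ 2 + Real.cos (θ/2) ^ 2 = 1 := Real.sin_sq_add_cos_sq _
    set s := Real.sin (θ/2) with hsdef
    set c := Real.cos (θ/2) with hcdef
    rw [Real.tan_eq_sin_div_cos]
    have heq : 2 / c + 1 / (c * s) + Real.sin (θ/2) / Real.cos (θ/2) = (1+s)^2 / (c*s) := by
      rw [← hsdef, ← hcdef]
      field_simp
      ring
    rw [heq]
    have hA : 27 * (c*s)^2 ≤ ((1+s)^2)^2 := by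
      nlinarith [mul_nonneg (mul_nonneg (sq_nonneg (2*s-1))
        (by linarith : (0:ℝ) ≤ 7*s+1)) (by linarith : (0:ℝ) ≤ 1+s), hsc, hs.le, hc.le]
    have key : 3 * Real.sqrt 3 * (c*s) ≤ (1+s)^2 := by
      nlinarith [hA, s3sq, s3.le, mul_pos hc hs, sq_nonneg (1+s),
        mul_nonneg (mul_nonneg s3.le hc.le) hs.le]
    have hterm : 0 ≤ 2 * n * d * (1 + s) := by positivity
    have : 3 * Real.sqrt 3 ≤ (1+s)^2 / (c*s) := by
      rw [le_div_iff₀ (mul_pos hc hs)]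
      exact key
    linarith
  · intro b hb
    have hval : ∀ d : ℝ, 0 < d →
        (3 * Real.sqrt 3 + 3 * n * d) ∈
          {r : ℝ | ∃ θ d : ℝ, 0 < θ ∧ θ < π ∧ 0 < d ∧
            r = 2 / Real.cos (θ / 2) + 1 / (Real.cos (θ / 2) * Real.sin (θ / 2))
                + Real.tan (θ / 2) + 2 * n * d * (1 + Real.sin (θ / 2))} := by
      intro d hd
      refine ⟨π/3, d, by positivity, by linarith [Real.pi_pos], hd, ?_⟩
      have h6 : π / 3 / 2 = π / 6 := by ring
      rw [h6, Real.tan_eq_sin_div_cos, Real.cos_pi_div_six, Real.sin_pi_div_six]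
      have hne : Real.sqrt 3 ≠ 0 := ne_of_gt s3
      field_simp
      nlinarith [s3sq]
    refine le_of_forall_pos_le_add ?_
    intro ε hε
    have hd : (0:ℝ) < ε / (3*(n+1)) := by positivity
    have h1 := hb (hval _ hd)
    have h2 : 3 * (n:ℝ) * (ε / (3*((n:ℝ)+1))) ≤ ε := by
      rw [div_eq_mul_inv, ← mul_assoc, mul_comm (3*(n:ℝ)) ε, mul_assoc]
      have hn1 : (0:ℝ) < 3*((n:ℝ)+1) := by positivity
      have h3 : (3*(n:ℝ)) * (3*((n:ℝ)+1))⁻¹ ≤ 1 := by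
        rw [mul_inv_le_iff₀ hn1]
        nlinarith [Nat.cast_nonneg (α := ℝ) n]
      nlinarith [hε.le]
    linarith
end
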